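/- Let ψ: V₁ → V₂ be a linear isomorphism between finite-dimensional real vector spaces carrying Randers norms Z_i = √(a_i) + β_i with Zermelo data (h_i, W_i), i = 1,2. Then the following are equivalent: (a) Z₂ ∘ ψ = Z₁; (b) ψ*a₂ = a₁ and ψ*β₂ = β₁; (c) ψ*h₂ = h₁ and ψ(W₁) = W₂. -/

import Mathlib

open scoped RealInnerProductSpace

/-- For a linear isomorphism `ψ` between spaces carrying Randers norms
`Z_i = √(a_i) + β_i` (with `a_i` the inner products, `β_i(v) = a_i(v, B_i)`) with Zermelo data
`(h_i, W_i)`, the following are equivalent: (a) `Z₂ ∘ ψ = Z₁`; (b) `ψ*a₂ = a₁` and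
`ψ*β₂ = β₁`; (c) `ψ*h₂ = h₁` and `ψ(W₁) = W₂`. -/
theorem randers_isometry_equiv {V₁ V₂ : Type*}
    [NormedAddCommGroup V₁] [InnerProductSpace ℝ V₁] [FiniteDimensional ℝ V₁]
    [NormedAddCommGroup V₂] [InnerProductSpace ℝ V₂] [FiniteDimensional ℝ V₂]
    (ψ : V₁ ≃ₗ[ℝ] V₂) (B₁ : V₁) (B₂ : V₂) (hB₁ : ⟪B₁, B₁⟫ < 1) (hB₂ : ⟪B₂, B₂⟫ < 1)
    (Z₁ : V₁ → ℝ) (hZ₁ : ∀ v : V₁, Z₁ v = Real.sqrt ⟪v, v⟫ + ⟪v, B₁⟫)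
    (Z₂ : V₂ → ℝ) (hZ₂ : ∀ v : V₂, Z₂ v = Real.sqrt ⟪v, v⟫ + ⟪v, B₂⟫)
    (μ₁ μ₂ : ℝ) (hμ₁ : μ₁ = 1 - ⟪B₁, B₁⟫) (hμ₂ : μ₂ = 1 - ⟪B₂, B₂⟫)
    (h₁ : V₁ → V₁ → ℝ) (hh₁ : ∀ w u : V₁, h₁ w u = μ₁ * (⟪w, u⟫ - ⟪B₁, w⟫ * ⟪B₁, u⟫))
    (h₂ : V₂ → V₂ → ℝ) (hh₂ : ∀ w u : V₂, h₂ w u = μ₂ * (⟪w, u⟫ - ⟪B₂, w⟫ * ⟪B₂, u⟫))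
    (W₁ : V₁) (hW₁ : W₁ = -(μ₁⁻¹ • B₁)) (W₂ : V₂) (hW₂ : W₂ = -(μ₂⁻¹ • B₂)) :
    ((∀ v : V₁, Z₂ (ψ v) = Z₁ v) ↔
      ((∀ u w : V₁, ⟪ψ u, ψ w⟫ = ⟪u, w⟫) ∧ (∀ u : V₁, ⟪ψ u, B₂⟫ = ⟪u, B₁⟫))) ∧
    (((∀ u w : V₁, ⟪ψ u, ψ w⟫ = ⟪u, w⟫) ∧ (∀ u : V₁, ⟪ψ u, B₂⟫ = ⟪u, B₁⟫)) ↔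
      ((∀ u w : V₁, h₂ (ψ u) (ψ w) = h₁ u w) ∧ ψ W₁ = W₂)) := by
  have hμ₁pos : (0:ℝ) < μ₁ := by rw [hμ₁]; linarith
  have hμ₂pos : (0:ℝ) < μ₂ := by rw [hμ₂]; linarith
  have hμ₁ne : μ₁ ≠ 0 := ne_of_gt hμ₁pos
  have hμ₂ne : μ₂ ≠ 0 := ne_of_gt hμ₂pos
  -- values of h on the wind
  have hWW₁ : h₁ W₁ W₁ = ⟪B₁, B₁⟫ := by
    rw [hh₁, hW₁]
    simp only [inner_neg_neg, inner_neg_left, inner_neg_right, real_inner_smul_left,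
      real_inner_smul_right, neg_neg]
    field_simp
    linear_combination (-⟪B₁, B₁⟫) * hμ₁
  have hWW₂ : h₂ W₂ W₂ = ⟪B₂, B₂⟫ := by
    rw [hh₂, hW₂]
    simp only [inner_neg_neg, inner_neg_left, inner_neg_right, real_inner_smul_left,
      real_inner_smul_right, neg_neg]
    field_simp
    linear_combination (-⟪B₂, B₂⟫) * hμ₂
  have huW₁ : ∀ u : V₁, h₁ u W₁ = -(μ₁ * ⟪u, B₁⟫) := by
    intro u
    have hne : (1:ℝ) - ⟪B₁, B₁⟫ ≠ 0 := ne_of_gt (by linarith)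
    rw [hh₁, hW₁, hμ₁]
    simp only [inner_neg_left, inner_neg_right, real_inner_smul_left, real_inner_smul_right,
      neg_neg, real_inner_comm B₁ u]
    field_simp
    ring
  have huW₂ : ∀ u : V₂, h₂ u W₂ = -(μ₂ * ⟪u, B₂⟫) := by
    intro u
    have hne : (1:ℝ) - ⟪B₂, B₂⟫ ≠ 0 := ne_of_gt (by linarith)
    rw [hh₂, hW₂, hμ₂]
    simp only [inner_neg_left, inner_neg_right, real_inner_smul_left, real_inner_smul_right,
      neg_neg, real_inner_comm B₂ u]
    field_simp
    ring
  constructor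
  · constructor
    · intro ha
      have key : ∀ v : V₁, ⟪ψ v, ψ v⟫ = ⟪v, v⟫ ∧ ⟪ψ v, B₂⟫ = ⟪v, B₁⟫ := by
        intro v
        have h1 := ha v
        have h2 := ha (-v)
        rw [hZ₁, hZ₂] at h1 h2
        rw [map_neg] at h2
        simp only [inner_neg_neg, inner_neg_left, inner_neg_right, neg_neg] at h2
        have hs : Real.sqrt ⟪ψ v, ψ v⟫ = Real.sqrt ⟪v, v⟫ := by linarith
        have e1 := Real.sq_sqrt (real_inner_self_nonneg (x := ψ v))
        have e2 := Real.sq_sqrt (real_inner_self_nonneg (x := v))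
        have hq : ⟪ψ v, ψ v⟫ = ⟪v, v⟫ := by rw [← e1, hs, e2]
        exact ⟨hq, by linarith⟩
      refine ⟨fun u w => ?_, fun u => (key u).2⟩
      have h1 := (key (u + w)).1
      have h2 := (key u).1
      have h3 := (key w).1
      rw [map_add, real_inner_add_add_self, real_inner_add_add_self] at h1
      linarith
    · rintro ⟨ha, hb⟩ v
      rw [hZ₁, hZ₂, ha v v, hb v]
  · constructor
    · rintro ⟨ha, hb⟩
      have hψB : ψ B₁ = B₂ := by
        have horth : ∀ u : V₁, ⟪u, ψ.symm B₂ - B₁⟫ = 0 := by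
          intro u
          have h1 : ⟪ψ u, ψ (ψ.symm B₂)⟫ = ⟪u, ψ.symm B₂⟫ := ha u _
          rw [ψ.apply_symm_apply] at h1
          rw [inner_sub_right, ← h1, hb u]; ring
        have h0 : ψ.symm B₂ - B₁ = 0 :=
          inner_self_eq_zero.mp (horth (ψ.symm B₂ - B₁))
        have h0' : ψ.symm B₂ = B₁ := by rwa [sub_eq_zero] at h0
        rw [← h0', ψ.apply_symm_apply]
      have hBB : ⟪B₂, B₂⟫ = ⟪B₁, B₁⟫ := by
        rw [← hψB]; exact ha B₁ B₁
      have hμeq : μ₂ = μ₁ := by rw [hμ₁, hμ₂, hBB]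
      constructor
      · intro u w
        have e1 : ⟪B₂, ψ u⟫ = ⟪B₁, u⟫ := by
          rw [real_inner_comm, hb u, real_inner_comm]
        have e2 : ⟪B₂, ψ w⟫ = ⟪B₁, w⟫ := by
          rw [real_inner_comm, hb w, real_inner_comm]
        rw [hh₁, hh₂, hμeq, ha u w, e1, e2]
      · rw [hW₁, hW₂, map_neg, map_smul, hψB, hμeq]
    · rintro ⟨hc, hw⟩
      have hBB : ⟪B₂, B₂⟫ = ⟪B₁, B₁⟫ := by
        have h0 := hc W₁ W₁
        rw [hw, hWW₁, hWW₂] at h0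
        exact h0
      have hμeq : μ₂ = μ₁ := by rw [hμ₁, hμ₂, hBB]
      have hb : ∀ u : V₁, ⟪ψ u, B₂⟫ = ⟪u, B₁⟫ := by
        intro u
        have h0 := hc u W₁
        rw [hw, huW₁, huW₂, hμeq] at h0
        have h1 : μ₁ * ⟪ψ u, B₂⟫ = μ₁ * ⟪u, B₁⟫ := by linarith
        exact mul_left_cancel₀ hμ₁ne h1
      refine ⟨fun u w => ?_, hb⟩
      have h0 := hc u w
      rw [hh₁, hh₂, hμeq] at h0
      have e1 : ⟪B₂, ψ u⟫ = ⟪B₁, u⟫ := by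
        rw [real_inner_comm, hb u, real_inner_comm]
      have e2 : ⟪B₂, ψ w⟫ = ⟪B₁, w⟫ := by
        rw [real_inner_comm, hb w, real_inner_comm]
      rw [e1, e2] at h0
      have h1 := mul_left_cancel₀ hμ₁ne h0
      linarith
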